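/- arXiv:hep-th/0512271 — 2 statements merged into one kernel-verified Lean document; each statement's English description precedes it below -/
import Mathlib

section
/- Fix real constants Ω > 0, μ₀ ≥ 0 and M > 1. For each integer i ≥ 1 and u, v ∈ ℝ⁴ define the sliced propagator C^i(u,v) = ∫_{M^{-2i}}^{M^{-2(i-1)}} (Ω / (2π·sinh α)²) · exp( −(Ω/4)·coth(α/2)·‖u‖² − (Ω/4)·tanh(α/2)·‖v‖² − (μ₀²/Ω)·α ) dα. Then there exist constants K > 0 and c > 0, depending only on Ω, μ₀ and M, such that for all i ≥ 1 and all u, v ∈ ℝ⁴ one has C^i(u,v) ≤ K·M^{2i}·exp( −c·( M^{i}·‖u‖ + M^{-i}·‖v‖ ) ). -/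
open MeasureTheory Real

/-- The slice `i` of the Grosse–Wulkenhaar propagator in short/long variables. -/
noncomputable def slicedPropagator (Ω μ₀ M : ℝ) (i : ℕ)
    (u v : EuclideanSpace ℝ (Fin 4)) : ℝ :=
  ∫ α in Set.Icc (M ^ (-2 * (i : ℝ))) (M ^ (-2 * ((i : ℝ) - 1))),
    (Ω / (2 * π * Real.sinh α) ^ 2) *
      Real.exp (-(Ω / 4) * (Real.cosh (α / 2) / Real.sinh (α / 2)) * ‖u‖ ^ 2
        - (Ω / 4) * Real.tanh (α / 2) * ‖v‖ ^ 2 - (μ₀ ^ 2 / Ω) * α)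

lemma sinh_le_mul_exp {x : ℝ} (_hx : 0 ≤ x) : Real.sinh x ≤ x * Real.exp x := by
  have h1 := Real.add_one_le_exp (-(2 * x))
  have h2 : Real.exp (-x) = Real.exp x * Real.exp (-(2 * x)) := by
    rw [← Real.exp_add]; ring_nf
  rw [Real.sinh_eq]
  nlinarith [Real.exp_pos x]

set_option maxHeartbeats 1000000 in
/-- Scaled bound on the sliced Grosse–Wulkenhaar propagator:
`Cⁱ(u,v) ≤ K M^{2i} exp(-c (Mⁱ‖u‖ + M⁻ⁱ‖v‖))`. -/
theorem sliced_propagator_bound (Ω μ₀ M : ℝ) (hΩ : 0 < Ω) (hμ₀ : 0 ≤ μ₀) (hM : 1 < M) :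
    ∃ K c : ℝ, 0 < K ∧ 0 < c ∧
      ∀ i : ℕ, 1 ≤ i → ∀ u v : EuclideanSpace ℝ (Fin 4),
        slicedPropagator Ω μ₀ M i u v ≤
          K * M ^ (2 * (i : ℝ)) *
            Real.exp (-c * (M ^ (i : ℝ) * ‖u‖ + M ^ (-(i : ℝ)) * ‖v‖)) := by
  have hM0 : (0:ℝ) < M := lt_trans one_pos hM
  set a : ℝ := min (Ω / (2 * Real.exp (1/2) * M ^ 2)) (Ω / (8 * Real.cosh (1/2))) with ha_def
  have hcosh0 : (0:ℝ) < Real.cosh (1/2) := Real.cosh_pos _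
  have ha : 0 < a := by
    apply lt_min
    · positivity
    · positivity
  refine ⟨Ω / (4 * π ^ 2) * M ^ 2 * Real.exp (a / 2), a, by positivity, ha, ?_⟩
  intro i hi u v
  have hi1 : (1:ℝ) ≤ (i:ℝ) := by exact_mod_cast hi
  set P : ℝ := M ^ ((i:ℝ)) with hP_def
  set Q : ℝ := M ^ (-(i:ℝ)) with hQ_def
  have hP0 : 0 < P := Real.rpow_pos_of_pos hM0 _
  have hQ0 : 0 < Q := Real.rpow_pos_of_pos hM0 _
  have hPQ : P * Q = 1 := by
    rw [hP_def, hQ_def, ← Real.rpow_add hM0]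
    simp
  set t : ℝ := M ^ (-2 * (i:ℝ)) with ht_def
  set s : ℝ := M ^ (-2 * ((i:ℝ) - 1)) with hs_def
  have hMn : M ^ (2:ℕ) = M ^ ((2:ℕ):ℝ) := (Real.rpow_natCast M 2).symm
  have ht_eq : t = Q ^ 2 := by
    rw [ht_def, hQ_def, sq, ← Real.rpow_add hM0]
    congr 1; ring
  have hs_eq : s = M ^ 2 * Q ^ 2 := by
    have h : s = M ^ ((2:ℕ):ℝ) * (Q * Q) := by
      rw [hs_def, hQ_def, ← Real.rpow_add hM0, ← Real.rpow_add hM0]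
      congr 1; push_cast; ring
    rw [h, ← hMn]; ring
  have hM2i : M ^ (2 * (i:ℝ)) = P ^ 2 := by
    rw [hP_def, sq, ← Real.rpow_add hM0]
    congr 1; ring
  have hs1 : s ≤ 1 := by
    rw [hs_def]
    apply Real.rpow_le_one_of_one_le_of_nonpos hM.le
    linarith
  have hts : t ≤ s := by
    rw [ht_def, hs_def]
    apply Real.rpow_le_rpow_of_exponent_le hM.le
    linarith
  clear_value P Q t s
  have hPQ2 : P ^ 2 * Q ^ 2 = 1 := by linear_combination (P * Q + 1) * hPQ
  have ht0 : 0 < t := by rw [ht_eq]; positivity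
  set x : ℝ := P * ‖u‖ with hx_def
  set y : ℝ := Q * ‖v‖ with hy_def
  have hx0 : 0 ≤ x := by positivity
  have hy0 : 0 ≤ y := by positivity
  set B : ℝ := Ω / (4 * π ^ 2) * P ^ 2 * P ^ 2 * Real.exp (a / 2 - a * (x + y)) with hB_def
  have hB0 : 0 ≤ B := by positivity
  set f : ℝ → ℝ := fun α =>
    (Ω / (2 * π * Real.sinh α) ^ 2) *
      Real.exp (-(Ω / 4) * (Real.cosh (α / 2) / Real.sinh (α / 2)) * ‖u‖ ^ 2
        - (Ω / 4) * Real.tanh (α / 2) * ‖v‖ ^ 2 - (μ₀ ^ 2 / Ω) * α) with hf_def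
  -- pointwise bound
  have hpt : ∀ α ∈ Set.Icc t s, ‖f α‖ ≤ B := by
    intro α hα
    obtain ⟨hα1, hα2⟩ := hα
    have hα0 : 0 < α := lt_of_lt_of_le ht0 hα1
    have hαle1 : α ≤ 1 := le_trans hα2 hs1
    have hsinhα : 0 < Real.sinh α := by
      rw [← Real.sinh_zero]; exact Real.sinh_lt_sinh.mpr hα0
    have hsinh2 : 0 < Real.sinh (α / 2) := by
      rw [← Real.sinh_zero]
      exact Real.sinh_lt_sinh.mpr (by linarith)
    have hcoshα2 : 0 < Real.cosh (α / 2) := Real.cosh_pos _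
    -- bound on the prefactor
    have hαsinh : α ≤ Real.sinh α := Real.self_le_sinh_iff.mpr hα0.le
    have hpre : Ω / (2 * π * Real.sinh α) ^ 2 ≤ Ω / (4 * π ^ 2) * P ^ 2 * P ^ 2 := by
      have hmul : 2 * π * t ≤ 2 * π * Real.sinh α :=
        mul_le_mul_of_nonneg_left (le_trans hα1 hαsinh)
          (by positivity)
      have h1 : (2 * π * t) ^ 2 ≤ (2 * π * Real.sinh α) ^ 2 :=
        pow_le_pow_left₀ (by positivity) hmul 2
      have h2 : Ω / (2 * π * Real.sinh α) ^ 2 ≤ Ω / (2 * π * t) ^ 2 :=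
        div_le_div_of_nonneg_left hΩ.le (by positivity) h1
      refine h2.trans (le_of_eq ?_)
      rw [ht_eq]
      have hP2 : P ^ 2 = (Q ^ 2)⁻¹ := eq_inv_of_mul_eq_one_left hPQ2
      rw [hP2]
      have hπ : π ≠ 0 := Real.pi_ne_zero
      field_simp
      ring
    -- bound on the exponent
    set R : ℝ := Real.cosh (α / 2) / Real.sinh (α / 2) with hR_def
    have hR0 : 0 < R := by rw [hR_def]; positivity
    set T : ℝ := Real.tanh (α / 2) with hT_def
    have hE : -(Ω / 4) * R * ‖u‖ ^ 2 - (Ω / 4) * T * ‖v‖ ^ 2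
        - (μ₀ ^ 2 / Ω) * α ≤ a / 2 - a * (x + y) := by
      -- u-part : a * x^2 ≤ (Ω/4) * R * ‖u‖^2
      have hsinh_ub : Real.sinh (α / 2) ≤ (α / 2) * Real.exp (1/2) := by
        calc Real.sinh (α / 2) ≤ (α / 2) * Real.exp (α / 2) :=
              sinh_le_mul_exp (by linarith)
          _ ≤ (α / 2) * Real.exp (1/2) := by
              apply mul_le_mul_of_nonneg_left _ (by linarith)
              exact Real.exp_le_exp.mpr (by linarith)
      have hcosh1 : 1 ≤ Real.cosh (α / 2) := Real.one_le_cosh _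
      have hexp0 : (0:ℝ) < Real.exp (1/2) := Real.exp_pos _
      have hRα : 2 ≤ Real.exp (1/2) * α * R := by
        rw [hR_def]
        have heq : Real.exp (1/2) * α * (Real.cosh (α / 2) / Real.sinh (α / 2))
            = Real.exp (1/2) * α * Real.cosh (α / 2) / Real.sinh (α / 2) := by ring
        rw [heq, le_div_iff₀ hsinh2]
        have hstep : Real.exp (1/2) * α * 1 ≤ Real.exp (1/2) * α * Real.cosh (α / 2) :=
          mul_le_mul_of_nonneg_left hcosh1 (by positivity)
        linarith only [hsinh_ub, hstep]
      have hu : a * x ^ 2 ≤ Ω / 4 * R * ‖u‖ ^ 2 := by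
        have hαub : α ≤ M ^ 2 * Q ^ 2 := by rw [← hs_eq]; exact hα2
        have h5 : Real.exp (1/2) * α * R ≤ Real.exp (1/2) * (M ^ 2 * Q ^ 2) * R := by
          have := mul_le_mul_of_nonneg_left hαub hexp0.le
          exact mul_le_mul_of_nonneg_right (by linarith) hR0.le
        have h6 : 2 ≤ Real.exp (1/2) * (M ^ 2 * Q ^ 2) * R := le_trans hRα h5
        have h7 : P ^ 2 * 2 ≤ P ^ 2 * (Real.exp (1/2) * (M ^ 2 * Q ^ 2) * R) :=
          mul_le_mul_of_nonneg_left h6 (by positivity)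
        have h8 : P ^ 2 * (Real.exp (1/2) * (M ^ 2 * Q ^ 2) * R)
            = Real.exp (1/2) * M ^ 2 * R := by
          linear_combination (Real.exp (1/2) * M ^ 2 * R) * hPQ2
        have h4 : 2 * P ^ 2 ≤ Real.exp (1/2) * M ^ 2 * R := by linarith
        have ha_le : a * (2 * Real.exp (1/2) * M ^ 2) ≤ Ω := by
          have hmin := min_le_left (Ω / (2 * Real.exp (1/2) * M ^ 2)) (Ω / (8 * Real.cosh (1/2)))
          rw [← ha_def] at hmin
          rw [← le_div_iff₀ (by positivity)]
          exact hmin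
        have h9 : a * (2 * P ^ 2) ≤ a * (Real.exp (1/2) * M ^ 2 * R) :=
          mul_le_mul_of_nonneg_left h4 ha.le
        have h10 : a * (2 * Real.exp (1/2) * M ^ 2) * R ≤ Ω * R :=
          mul_le_mul_of_nonneg_right ha_le hR0.le
        have key : a * P ^ 2 ≤ Ω / 4 * R := by linarith only [h9, h10]
        have hnu : (0:ℝ) ≤ ‖u‖ ^ 2 := sq_nonneg _
        have h11 : a * P ^ 2 * ‖u‖ ^ 2 ≤ Ω / 4 * R * ‖u‖ ^ 2 :=
          mul_le_mul_of_nonneg_right key hnu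
        rw [hx_def, mul_pow]
        linarith only [h11]
      -- v-part : a * y^2 ≤ (Ω/4) * T * ‖v‖^2
      have htanh : α / (2 * Real.cosh (1/2)) ≤ T := by
        rw [hT_def, Real.tanh_eq_sinh_div_cosh]
        have hs1' : α / 2 ≤ Real.sinh (α / 2) := Real.self_le_sinh_iff.mpr (by linarith)
        have hc1 : Real.cosh (α / 2) ≤ Real.cosh (1/2) := by
          rw [Real.cosh_le_cosh]
          rw [abs_of_nonneg (by linarith : (0:ℝ) ≤ α / 2),
            abs_of_nonneg (by norm_num : (0:ℝ) ≤ (1:ℝ)/2)]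
          linarith
        rw [div_le_div_iff₀ (by positivity) hcoshα2]
        have e1 : α * Real.cosh (α / 2) ≤ α * Real.cosh (1/2) :=
          mul_le_mul_of_nonneg_left hc1 hα0.le
        have e2 : (α / 2) * Real.cosh (1/2) ≤ Real.sinh (α / 2) * Real.cosh (1/2) :=
          mul_le_mul_of_nonneg_right hs1' hcosh0.le
        linarith only [e1, e2]
      have hT0 : 0 < T := by
        have : 0 < α / (2 * Real.cosh (1/2)) := by positivity
        linarith
      have hv : a * y ^ 2 ≤ Ω / 4 * T * ‖v‖ ^ 2 := by
        have ha_le : a * (8 * Real.cosh (1/2)) ≤ Ω := by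
          have hmin := min_le_right (Ω / (2 * Real.exp (1/2) * M ^ 2)) (Ω / (8 * Real.cosh (1/2)))
          rw [← ha_def] at hmin
          rw [← le_div_iff₀ (by positivity)]
          exact hmin
        have hαlb : Q ^ 2 ≤ α := by rw [← ht_eq]; exact hα1
        have h7 : Q ^ 2 / (2 * Real.cosh (1/2)) ≤ T := by
          refine le_trans ?_ htanh
          gcongr
        have h8 : Q ^ 2 ≤ 2 * Real.cosh (1/2) * T := by
          rw [div_le_iff₀ (by positivity)] at h7
          linarith
        have h9 : a * Q ^ 2 ≤ a * (2 * Real.cosh (1/2) * T) :=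
          mul_le_mul_of_nonneg_left h8 ha.le
        have h10 : a * (8 * Real.cosh (1/2)) * T ≤ Ω * T :=
          mul_le_mul_of_nonneg_right ha_le hT0.le
        have key : a * Q ^ 2 ≤ Ω / 4 * T := by linarith only [h9, h10]
        have hnv : (0:ℝ) ≤ ‖v‖ ^ 2 := sq_nonneg _
        have h11 : a * Q ^ 2 * ‖v‖ ^ 2 ≤ Ω / 4 * T * ‖v‖ ^ 2 :=
          mul_le_mul_of_nonneg_right key hnv
        rw [hy_def, mul_pow]
        linarith only [h11]
      -- quadratic to linear
      have hqx : -(a * x ^ 2) ≤ a / 4 - a * x := by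
        linarith only [mul_nonneg ha.le (sq_nonneg (x - 1/2))]
      have hqy : -(a * y ^ 2) ≤ a / 4 - a * y := by
        linarith only [mul_nonneg ha.le (sq_nonneg (y - 1/2))]
      have hμ : 0 ≤ (μ₀ ^ 2 / Ω) * α := by positivity
      linarith only [hu, hv, hqx, hqy, hμ]
    have hfnn : 0 ≤ f α := by
      rw [hf_def]
      positivity
    rw [Real.norm_eq_abs, abs_of_nonneg hfnn, hf_def]
    calc (Ω / (2 * π * Real.sinh α) ^ 2) *
        Real.exp (-(Ω / 4) * (Real.cosh (α / 2) / Real.sinh (α / 2)) * ‖u‖ ^ 2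
          - (Ω / 4) * Real.tanh (α / 2) * ‖v‖ ^ 2 - (μ₀ ^ 2 / Ω) * α)
        ≤ (Ω / (4 * π ^ 2) * P ^ 2 * P ^ 2) * Real.exp (a / 2 - a * (x + y)) := by
          apply mul_le_mul hpre (Real.exp_le_exp.mpr hE) (Real.exp_pos _).le (by positivity)
      _ = B := by rw [hB_def]
  -- the integral bound
  have hmeas : volume (Set.Icc t s) < ⊤ := by
    rw [Real.volume_Icc]
    exact ENNReal.ofReal_lt_top
  have hcont : ContinuousOn f (Set.Icc t s) := by
    rw [hf_def]
    apply ContinuousOn.mul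
    · apply ContinuousOn.div continuousOn_const
      · exact ((continuous_const.mul Real.continuous_sinh).pow 2).continuousOn
      · intro α hα
        have hα0 : 0 < α := lt_of_lt_of_le ht0 hα.1
        have hs : 0 < Real.sinh α := by
          rw [← Real.sinh_zero]; exact Real.sinh_lt_sinh.mpr hα0
        have hπ := Real.pi_pos
        positivity
    · apply Real.continuous_exp.comp_continuousOn
      apply ContinuousOn.sub
      apply ContinuousOn.sub
      · apply ContinuousOn.mul _ continuousOn_const
        apply ContinuousOn.mul continuousOn_const
        apply ContinuousOn.div
        · exact (Real.continuous_cosh.comp (continuous_id.div_const 2)).continuousOn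
        · exact (Real.continuous_sinh.comp (continuous_id.div_const 2)).continuousOn
        · intro α hα
          have hα0 : 0 < α := lt_of_lt_of_le ht0 hα.1
          have : 0 < Real.sinh (α / 2) := by
            rw [← Real.sinh_zero]; exact Real.sinh_lt_sinh.mpr (by linarith)
          exact ne_of_gt this
      · have htanhcont : ContinuousOn (fun α : ℝ => Real.tanh (α / 2)) (Set.Icc t s) := by
          have h : ∀ β : ℝ, Real.tanh (β / 2) = Real.sinh (β / 2) / Real.cosh (β / 2) :=
            fun β => Real.tanh_eq_sinh_div_cosh _
          simp only [h]
          exact ContinuousOn.div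
            ((Real.continuous_sinh.comp (continuous_id.div_const 2)).continuousOn)
            ((Real.continuous_cosh.comp (continuous_id.div_const 2)).continuousOn)
            (fun β _ => (Real.cosh_pos _).ne')
        exact (continuousOn_const.mul htanhcont).mul continuousOn_const
      · exact (continuous_const.mul continuous_id).continuousOn
  have hintle : slicedPropagator Ω μ₀ M i u v ≤ B * (volume (Set.Icc t s)).toReal := by
    have hsp : slicedPropagator Ω μ₀ M i u v = ∫ α in Set.Icc t s, f α := by
      simp only [slicedPropagator]
      rw [ht_def, hs_def, hf_def]
    rw [hsp]
    refine le_trans (le_abs_self _) ?_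
    rw [← Real.norm_eq_abs]
    exact norm_setIntegral_le_of_norm_le_const hmeas hpt
  have hvol : (volume (Set.Icc t s)).toReal ≤ M ^ 2 * Q ^ 2 := by
    rw [Real.volume_Icc, ENNReal.toReal_ofReal (by linarith)]
    rw [← hs_eq]
    linarith
  calc slicedPropagator Ω μ₀ M i u v ≤ B * (volume (Set.Icc t s)).toReal := hintle
    _ ≤ B * (M ^ 2 * Q ^ 2) := mul_le_mul_of_nonneg_left hvol hB0
    _ = Ω / (4 * π ^ 2) * M ^ 2 * Real.exp (a / 2) * M ^ (2 * (i:ℝ)) *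
        Real.exp (-a * (x + y)) := by
        rw [hB_def, hM2i]
        have hsplit : a / 2 - a * (x + y) = a / 2 + -a * (x + y) := by ring
        rw [hsplit, Real.exp_add]
        linear_combination (Ω / (4 * π ^ 2) * M ^ 2 * Real.exp (a / 2) *
          Real.exp (-a * (x + y)) * P ^ 2) * hPQ2
    _ = _ := by rw [hx_def, hy_def, hP_def, hQ_def]
end

section
/- Let ω > B ≥ 0 be real numbers. Then for every t with 0 < t ≤ 1 one has (cosh(ωt) − cosh(Bt)) / sinh(ωt) ≥ ( (ω² − B²) / (2·ω·cosh ω) ) · t. In particular the coefficient of the long-variable term ‖x‖² + ‖y‖² in the exponent of the LSZ propagator is bounded below, on the parameter slice t ∈ [M^{-2i}, M^{-2(i-1)}] with M > 1 and i ≥ 1, by a positive constant times M^{-2i}. -/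
open Real

lemma cosh_sub_cosh' (a b : ℝ) :
    Real.cosh a - Real.cosh b =
      2 * Real.sinh ((a + b) / 2) * Real.sinh ((a - b) / 2) := by
  have h1 : a = (a + b) / 2 + (a - b) / 2 := by ring
  have h2 : b = (a + b) / 2 - (a - b) / 2 := by ring
  rw [h1, h2] at *
  rw [Real.cosh_add, Real.cosh_sub]
  ring

lemma cosh_diff_ge (a b : ℝ) (hb : 0 ≤ b) (hab : b ≤ a) :
    (a ^ 2 - b ^ 2) / 2 ≤ Real.cosh a - Real.cosh b := by
  rw [cosh_sub_cosh' a b]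
  have h1 : (a + b) / 2 ≤ Real.sinh ((a + b) / 2) :=
    Real.self_le_sinh_iff.2 (by linarith)
  have h2 : (a - b) / 2 ≤ Real.sinh ((a - b) / 2) :=
    Real.self_le_sinh_iff.2 (by linarith)
  nlinarith [mul_le_mul h1 h2 (by linarith) (le_trans (by linarith) h1)]

lemma sinh_le_mul_cosh (x : ℝ) (hx : 0 ≤ x) : Real.sinh x ≤ x * Real.cosh x := by
  have hmono : MonotoneOn (fun y : ℝ => y * Real.cosh y - Real.sinh y) (Set.Ici 0) := by
    apply monotoneOn_of_deriv_nonneg (convex_Ici 0)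
    · exact (Continuous.sub (continuous_id.mul Real.continuous_cosh)
        Real.continuous_sinh).continuousOn
    · intro y hy
      exact ((differentiable_id.mul Real.differentiable_cosh).sub
        Real.differentiable_sinh).differentiableAt.differentiableWithinAt
    · intro y hy
      rw [interior_Ici] at hy
      have hd : HasDerivAt (fun y : ℝ => y * Real.cosh y - Real.sinh y)
          (1 * Real.cosh y + y * Real.sinh y - Real.cosh y) y :=
        ((hasDerivAt_id y).mul (Real.hasDerivAt_cosh y)).sub (Real.hasDerivAt_sinh y)
      rw [hd.deriv]
      have : 0 ≤ Real.sinh y := (Real.sinh_pos_iff.2 hy).le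
      nlinarith [mul_nonneg (le_of_lt (Set.mem_Ioi.1 hy)) this]
  have := hmono (Set.self_mem_Ici) (Set.mem_Ici.2 hx) hx
  simpa using this

/-- Small-parameter lower bound on the long-variable coefficient of the LSZ
propagator: for `ω > B ≥ 0` and `0 < t ≤ 1`,
`(cosh ωt − cosh Bt)/sinh ωt ≥ ((ω² − B²)/(2ω cosh ω))·t`; in particular on the
slice `t ∈ [M^{−2i}, M^{−2(i−1)}]` it is bounded below by a positive constant
times `M^{−2i}`. -/
theorem lsz_long_variable_coefficient_bound (ω B : ℝ) (hB : 0 ≤ B) (hωB : B < ω) :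
    (∀ t : ℝ, 0 < t → t ≤ 1 →
      (Real.cosh (ω * t) - Real.cosh (B * t)) / Real.sinh (ω * t) ≥
        ((ω ^ 2 - B ^ 2) / (2 * ω * Real.cosh ω)) * t) ∧
    (∀ M : ℝ, 1 < M → ∃ C : ℝ, 0 < C ∧
      ∀ i : ℕ, 1 ≤ i →
        ∀ t ∈ Set.Icc (M ^ (-2 * (i : ℝ))) (M ^ (-2 * ((i : ℝ) - 1))),
          (Real.cosh (ω * t) - Real.cosh (B * t)) / Real.sinh (ω * t) ≥
            C * M ^ (-2 * (i : ℝ))) := by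
  have hω : 0 < ω := lt_of_le_of_lt hB hωB
  have hcosh : 0 < Real.cosh ω := Real.cosh_pos ω
  have main : ∀ t : ℝ, 0 < t → t ≤ 1 →
      (Real.cosh (ω * t) - Real.cosh (B * t)) / Real.sinh (ω * t) ≥
        ((ω ^ 2 - B ^ 2) / (2 * ω * Real.cosh ω)) * t := by
    intro t ht ht1
    have hωt : 0 < ω * t := mul_pos hω ht
    have hs : 0 < Real.sinh (ω * t) := Real.sinh_pos_iff.2 hωt
    rw [ge_iff_le, le_div_iff₀ hs]
    -- sinh (ωt) ≤ ωt cosh(ωt) ≤ ωt cosh ω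
    have h1 : Real.sinh (ω * t) ≤ ω * t * Real.cosh ω := by
      calc Real.sinh (ω * t) ≤ ω * t * Real.cosh (ω * t) :=
            sinh_le_mul_cosh _ hωt.le
        _ ≤ ω * t * Real.cosh ω := by
            apply mul_le_mul_of_nonneg_left _ hωt.le
            apply Real.cosh_le_cosh.2
            rw [abs_of_pos hωt, abs_of_pos hω]
            nlinarith
    have h2 : ((ω * t) ^ 2 - (B * t) ^ 2) / 2 ≤
        Real.cosh (ω * t) - Real.cosh (B * t) :=
      cosh_diff_ge _ _ (by positivity) (by nlinarith)
    have hcoef : 0 ≤ (ω ^ 2 - B ^ 2) / (2 * ω * Real.cosh ω) * t := by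
      apply mul_nonneg _ ht.le
      apply div_nonneg (by nlinarith) (by positivity)
    calc (ω ^ 2 - B ^ 2) / (2 * ω * Real.cosh ω) * t * Real.sinh (ω * t)
        ≤ (ω ^ 2 - B ^ 2) / (2 * ω * Real.cosh ω) * t * (ω * t * Real.cosh ω) :=
          mul_le_mul_of_nonneg_left h1 hcoef
      _ = ((ω * t) ^ 2 - (B * t) ^ 2) / 2 := by
          field_simp
      _ ≤ Real.cosh (ω * t) - Real.cosh (B * t) := h2
  refine ⟨main, ?_⟩
  intro M hM
  refine ⟨(ω ^ 2 - B ^ 2) / (2 * ω * Real.cosh ω), div_pos (by nlinarith) (by positivity), ?_⟩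
  intro i hi t ht
  have hM0 : (0:ℝ) < M := by linarith
  have ht0 : 0 < t := lt_of_lt_of_le (Real.rpow_pos_of_pos hM0 _) ht.1
  have ht1 : t ≤ 1 := by
    refine le_trans ht.2 (Real.rpow_le_one_of_one_le_of_nonpos hM.le ?_)
    have : (1:ℝ) ≤ (i:ℝ) := by exact_mod_cast hi
    linarith
  have hcoef : 0 ≤ (ω ^ 2 - B ^ 2) / (2 * ω * Real.cosh ω) :=
    div_nonneg (by nlinarith) (by positivity)
  calc (ω ^ 2 - B ^ 2) / (2 * ω * Real.cosh ω) * M ^ (-2 * (i : ℝ))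
      ≤ (ω ^ 2 - B ^ 2) / (2 * ω * Real.cosh ω) * t :=
        mul_le_mul_of_nonneg_left ht.1 hcoef
    _ ≤ (Real.cosh (ω * t) - Real.cosh (B * t)) / Real.sinh (ω * t) :=
        main t ht0 ht1
end
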